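/- arXiv:1403.3079 — 5 statements merged into one kernel-verified Lean document; each statement's English description precedes it below -/
import Mathlib

section
/- Let L be a finite relational language in which every relation symbol has arity at most 2, and let P₂ be a 1-adequate class of finite L-structures. Then the class RP₂ has the amalgamation property: for all A, B, C ∈ RP₂ and embeddings f_B : A → B, f_C : A → C, there exist D ∈ RP₂ and embeddings g_B : B → D, g_C : C → D such that g_B ∘ f_B = g_C ∘ f_C. -/
open FirstOrder CategoryTheory

/-- A class `P` of finite structures in a binary relational language is *1-adequate* if it
consists of finite structures, is closed under isomorphism, is closed under substructures
(the hereditary property), and any two one-element structures in `P` embed with disjoint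
images into a common member of `P`. -/
def OneAdequate (L : FirstOrder.Language) (P : Set (Bundled L.Structure)) : Prop :=
  (∀ M ∈ P, Finite M) ∧
  (∀ M N : Bundled L.Structure, Nonempty (M ≃[L] N) → M ∈ P → N ∈ P) ∧
  (∀ M : Bundled L.Structure, M ∈ P → ∀ S : L.Substructure M,
      (Bundled.of (↥S) : Bundled L.Structure) ∈ P) ∧
  (∀ A B : Bundled L.Structure, A ∈ P → B ∈ P → Nat.card A = 1 → Nat.card B = 1 →
      ∃ C ∈ P, ∃ (f : A ↪[L] C) (g : B ↪[L] C), Disjoint (Set.range f) (Set.range g))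

/-- Given a class `P` of finite structures, `RP L P` is the class of all finite `L`-structures
all of whose substructures with exactly 1 or exactly 2 elements are isomorphic to a member
of `P`. -/
def RP (L : FirstOrder.Language) (P : Set (Bundled L.Structure)) :
    Set (Bundled L.Structure) :=
  {N | Finite N ∧ ∀ S : L.Substructure N, (Nat.card S = 1 ∨ Nat.card S = 2) →
      ∃ M ∈ P, Nonempty (S ≃[L] M)}

namespace Statement2Aux

open FirstOrder Language

variable {L : FirstOrder.Language} [L.IsRelational]

/-- In a relational language, any set is a substructure. -/
def setSub {M : Type*} [L.Structure M] (s : Set M) : L.Substructure M where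
  carrier := s
  fun_mem := fun f => isEmptyElim f

@[simp] lemma mem_setSub {M : Type*} [L.Structure M] {s : Set M} {x : M} :
    x ∈ setSub (L := L) s ↔ x ∈ s := Iff.rfl

lemma card_setSub {M : Type*} [L.Structure M] (s : Set M) :
    Nat.card (setSub (L := L) s) = s.ncard := by
  rw [← Nat.card_coe_set_eq]
  exact Nat.card_congr (Equiv.subtypeEquivRight fun x => Iff.rfl)

lemma relMap_zero_congr {M : Type*} [L.Structure M] (r : L.Relations 0)
    (x y : Fin 0 → M) : Structure.RelMap r x ↔ Structure.RelMap r y := by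
  rw [Subsingleton.elim x y]

lemma comp_fin1 {M N : Type*} (f : M → N) (p : M) : f ∘ ![p] = ![f p] := by
  funext i; fin_cases i <;> rfl

lemma comp_fin2 {M N : Type*} (f : M → N) (p q : M) : f ∘ ![p, q] = ![f p, f q] := by
  funext i; fin_cases i <;> rfl

/-- Transfer the RP-condition along an embedding: a substructure of `N` contained in the
range of an embedding `g : M ↪ N` with `M ∈ RP L P` is isomorphic to a member of `P`. -/
lemma mem_of_subset_range {P : Set (Bundled L.Structure)} {M : Bundled L.Structure}
    (hM : M ∈ RP L P) {N : Type*} [L.Structure N] (g : ↥M ↪[L] N)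
    (T : L.Substructure N) (h : (T : Set N) ⊆ Set.range g)
    (hcard : Nat.card T = 1 ∨ Nat.card T = 2) :
    ∃ Q ∈ P, Nonempty (↥T ≃[L] ↥Q) := by
  have hmap : (T.comap g.toHom).map g.toHom = T := by
    ext x
    simp only [Substructure.mem_map, Substructure.mem_comap]
    constructor
    · rintro ⟨y, hy, rfl⟩; exact hy
    · intro hx
      obtain ⟨y, rfl⟩ := h hx
      exact ⟨y, hx, rfl⟩
  have e := g.substructureEquivMap (T.comap g.toHom)
  rw [hmap] at e
  have hcard' : Nat.card (T.comap g.toHom) = 1 ∨ Nat.card (T.comap g.toHom) = 2 := by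
    rwa [Nat.card_congr e.toEquiv]
  obtain ⟨Q, hQ, ⟨e'⟩⟩ := hM.2 (T.comap g.toHom) hcard'
  exact ⟨Q, hQ, ⟨e'.comp e.symm⟩⟩

/-- `RP L P` is closed under isomorphism. -/
lemma RP_iso {P : Set (Bundled L.Structure)} {M : Bundled L.Structure} (hM : M ∈ RP L P)
    {N : Bundled L.Structure} (e : ↥M ≃[L] ↥N) : N ∈ RP L P := by
  refine ⟨?_, fun S hcard => ?_⟩
  · have := hM.1
    exact Finite.of_equiv _ e.toEquiv
  · refine mem_of_subset_range hM e.toEmbedding S (fun z _ => ⟨e.symm z, ?_⟩) hcard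
    show e (e.symm z) = z
    exact e.toEquiv.apply_symm_apply z

/-- Witness data for a pair of points `b ∈ B`, `c ∈ C`: a member `W` of `P` with two distinct
points whose quantifier-free 1-type matches those of `b` and `c` respectively. -/
structure Wit (P : Set (Bundled L.Structure)) (B C : Bundled L.Structure)
    (b : ↥B) (c : ↥C) where
  W : Bundled L.Structure
  hW : W ∈ P
  wb : ↥W
  wc : ↥W
  hne : wb ≠ wc
  h0 : ∀ r : L.Relations 0, Structure.RelMap (M := ↥W) r ![] ↔ Structure.RelMap (M := ↥B) r ![]
  hb1 : ∀ r : L.Relations 1, Structure.RelMap r ![wb] ↔ Structure.RelMap r ![b]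
  hb2 : ∀ r : L.Relations 2, Structure.RelMap r ![wb, wb] ↔ Structure.RelMap r ![b, b]
  hc1 : ∀ r : L.Relations 1, Structure.RelMap r ![wc] ↔ Structure.RelMap r ![c]
  hc2 : ∀ r : L.Relations 2, Structure.RelMap r ![wc, wc] ↔ Structure.RelMap r ![c, c]

section Construction

variable {P : Set (Bundled L.Structure)} {A B C : Bundled L.Structure}

/-- One-point substructures of members of `RP L P` are isomorphic to members of `P`. -/
lemma one_mem (hP : OneAdequate L P) {M : Bundled L.Structure} (hM : M ∈ RP L P) (m : ↥M) :
    ∃ Q ∈ P, Nonempty (↥(setSub (L := L) ({m} : Set ↥M)) ≃[L] ↥Q) ∧ Nat.card ↥Q = 1 := by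
  have h1 : Nat.card (setSub (L := L) ({m} : Set ↥M)) = 1 := by
    rw [card_setSub, Set.ncard_singleton]
  obtain ⟨Q, hQ, ⟨e⟩⟩ := hM.2 _ (Or.inl h1)
  refine ⟨Q, hQ, ⟨e⟩, ?_⟩
  rw [← Nat.card_congr e.toEquiv]
  exact h1

lemma wit_nonempty (hP : OneAdequate L P) (hB : B ∈ RP L P) (hC : C ∈ RP L P)
    (b : ↥B) (c : ↥C) : Nonempty (Wit P B C b c) := by
  obtain ⟨Qb, hQb, ⟨eb⟩, hb1⟩ := one_mem hP hB b
  obtain ⟨Qc, hQc, ⟨ec⟩, hc1⟩ := one_mem hP hC c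
  obtain ⟨W, hW, f, g, hdisj⟩ := hP.2.2.2 Qb Qc hQb hQc hb1 hc1
  set Eb : ↥(setSub (L := L) ({b} : Set ↥B)) ↪[L] ↥W := f.comp eb.toEmbedding with hEb
  set Ec : ↥(setSub (L := L) ({c} : Set ↥C)) ↪[L] ↥W := g.comp ec.toEmbedding with hEc
  have pb : b ∈ setSub (L := L) ({b} : Set ↥B) := rfl
  have pc : c ∈ setSub (L := L) ({c} : Set ↥C) := rfl
  refine ⟨⟨W, hW, Eb ⟨b, pb⟩, Ec ⟨c, pc⟩, ?_, ?_, ?_, ?_, ?_, ?_⟩⟩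
  · intro hcontra
    have h1 : Eb ⟨b, pb⟩ ∈ Set.range f := ⟨eb ⟨b, pb⟩, rfl⟩
    have h2 : Eb ⟨b, pb⟩ ∈ Set.range g := hcontra ▸ ⟨ec ⟨c, pc⟩, rfl⟩
    exact Set.disjoint_left.1 hdisj h1 h2
  · intro r
    have h := Eb.map_rel' r default
    exact ((relMap_zero_congr r ![] _).trans h).trans
      (relMap_zero_congr (M := ↥B) r _ ![])
  · intro r
    have h := Eb.map_rel' r ![⟨b, pb⟩]
    rw [comp_fin1] at h
    refine h.trans ?_
    show Structure.RelMap (M := ↥B) r (fun i => ↑((![(⟨b, pb⟩ : ↥(setSub _))]) i)) ↔ _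
    rw [show (fun i => ((![(⟨b, pb⟩ : ↥(setSub (L := L) ({b} : Set ↥B)))]) i : ↥B)) = ![b] by
      funext i; fin_cases i <;> rfl]
  · intro r
    have h := Eb.map_rel' r ![⟨b, pb⟩, ⟨b, pb⟩]
    rw [comp_fin2] at h
    refine h.trans ?_
    show Structure.RelMap (M := ↥B) r (fun i => ↑((![(⟨b, pb⟩ : ↥(setSub _)), ⟨b, pb⟩]) i)) ↔ _
    rw [show (fun i => ((![(⟨b, pb⟩ : ↥(setSub (L := L) ({b} : Set ↥B))), ⟨b, pb⟩]) i : ↥B))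
        = ![b, b] by funext i; fin_cases i <;> rfl]
  · intro r
    have h := Ec.map_rel' r ![⟨c, pc⟩]
    rw [comp_fin1] at h
    refine h.trans ?_
    show Structure.RelMap (M := ↥C) r (fun i => ↑((![(⟨c, pc⟩ : ↥(setSub _))]) i)) ↔ _
    rw [show (fun i => ((![(⟨c, pc⟩ : ↥(setSub (L := L) ({c} : Set ↥C)))]) i : ↥C)) = ![c] by
      funext i; fin_cases i <;> rfl]
  · intro r
    have h := Ec.map_rel' r ![⟨c, pc⟩, ⟨c, pc⟩]
    rw [comp_fin2] at h
    refine h.trans ?_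
    show Structure.RelMap (M := ↥C) r (fun i => ↑((![(⟨c, pc⟩ : ↥(setSub _)), ⟨c, pc⟩]) i)) ↔ _
    rw [show (fun i => ((![(⟨c, pc⟩ : ↥(setSub (L := L) ({c} : Set ↥C))), ⟨c, pc⟩]) i : ↥C))
        = ![c, c] by funext i; fin_cases i <;> rfl]

variable (fB : ↥A ↪[L] ↥B) (fC : ↥A ↪[L] ↥C)

/-- The carrier of the amalgam: `B` plus the part of `C` not coming from `A`. -/
def DC : Type _ := ↥B ⊕ {c : ↥C // c ∉ Set.range fC}

variable (wit : ∀ (b : ↥B) (c : ↥C), Wit P B C b c)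

open Classical in
/-- The binary relations on the amalgam. -/
noncomputable def rel2 (r : L.Relations 2) : DC (B := B) (C := C) fC → DC (B := B) (C := C) fC → Prop
  | Sum.inl b, Sum.inl b' => Structure.RelMap r ![b, b']
  | Sum.inl b, Sum.inr c =>
      if h : b ∈ Set.range fB then Structure.RelMap r ![fC h.choose, (c : ↥C)]
      else Structure.RelMap r ![(wit b c).wb, (wit b c).wc]
  | Sum.inr c, Sum.inl b =>
      if h : b ∈ Set.range fB then Structure.RelMap r ![(c : ↥C), fC h.choose]
      else Structure.RelMap r ![(wit b c).wc, (wit b c).wb]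
  | Sum.inr c, Sum.inr c' => Structure.RelMap r ![(c : ↥C), (c' : ↥C)]

/-- The unary relations on the amalgam. -/
def rel1 (r : L.Relations 1) : DC (B := B) (C := C) fC → Prop
  | Sum.inl b => Structure.RelMap r ![b]
  | Sum.inr c => Structure.RelMap r ![(c : ↥C)]

variable (hbin : ∀ n, 2 < n → IsEmpty (L.Relations n))

/-- The `L`-structure on the amalgam. -/
def SD : L.Structure (DC (B := B) (C := C) fC) where
  funMap := fun f => isEmptyElim f
  RelMap := fun {n} r x =>
    match n, r, x with
    | 0, r, _ => Structure.RelMap (M := ↥B) r ![]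
    | 1, r, x => rel1 fC r (x 0)
    | 2, r, x => rel2 fB fC wit r (x 0) (x 1)
    | (n + 3), r, _ => ((hbin (n + 3) (by omega)).false r).elim

/-- The amalgam as a bundled structure. -/
def DB : Bundled L.Structure := ⟨DC (B := B) (C := C) fC, SD fB fC wit hbin⟩


@[simp] lemma relMap_DB_two (r : L.Relations 2) (d0 d1 : ↥(DB fB fC wit hbin)) :
    Structure.RelMap r ![d0, d1] ↔ rel2 fB fC wit r d0 d1 := Iff.rfl

lemma fin1_eq {α : Type*} (x : Fin 1 → α) : x = ![x 0] := by
  funext i; fin_cases i; rfl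

lemma fin2_eq {α : Type*} (x : Fin 2 → α) : x = ![x 0, x 1] := by
  funext i; fin_cases i <;> rfl

lemma relMap_sub_one {M : Type*} [L.Structure M] {S' : L.Substructure M}
    (r : L.Relations 1) (p : ↥S') :
    Structure.RelMap r ![p] ↔ Structure.RelMap r ![(p : M)] := by
  show Structure.RelMap r (fun i => (((![p] : Fin 1 → ↥S') i : M))) ↔ _
  rw [show (fun i => (((![p] : Fin 1 → ↥S') i : M))) = ![(p : M)] from by
    funext i; fin_cases i; rfl]

lemma relMap_sub_two {M : Type*} [L.Structure M] {S' : L.Substructure M}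
    (r : L.Relations 2) (p q : ↥S') :
    Structure.RelMap r ![p, q] ↔ Structure.RelMap r ![(p : M), (q : M)] := by
  show Structure.RelMap r (fun i => (((![p, q] : Fin 2 → ↥S') i : M))) ↔ _
  rw [show (fun i => (((![p, q] : Fin 2 → ↥S') i : M))) = ![(p : M), (q : M)] from by
    funext i; fin_cases i <;> rfl]

lemma rel2_inl_inr_mem (a : ↥A) (c' : {c : ↥C // c ∉ Set.range fC}) (r : L.Relations 2) :
    rel2 fB fC wit r (Sum.inl (fB a)) (Sum.inr c') ↔
      Structure.RelMap r ![fC a, (c' : ↥C)] := by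
  have h : fB a ∈ Set.range fB := ⟨a, rfl⟩
  simp only [rel2]
  rw [dif_pos h, show h.choose = a from fB.injective h.choose_spec]

lemma rel2_inr_inl_mem (a : ↥A) (c' : {c : ↥C // c ∉ Set.range fC}) (r : L.Relations 2) :
    rel2 fB fC wit r (Sum.inr c') (Sum.inl (fB a)) ↔
      Structure.RelMap r ![(c' : ↥C), fC a] := by
  have h : fB a ∈ Set.range fB := ⟨a, rfl⟩
  simp only [rel2]
  rw [dif_pos h, show h.choose = a from fB.injective h.choose_spec]

lemma rel2_inl_inr_not_mem {b : ↥B} (hb : b ∉ Set.range fB)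
    (c' : {c : ↥C // c ∉ Set.range fC}) (r : L.Relations 2) :
    rel2 fB fC wit r (Sum.inl b) (Sum.inr c') ↔
      Structure.RelMap r ![(wit b c').wb, (wit b c').wc] := by
  simp only [rel2]
  rw [dif_neg hb]

lemma rel2_inr_inl_not_mem {b : ↥B} (hb : b ∉ Set.range fB)
    (c' : {c : ↥C // c ∉ Set.range fC}) (r : L.Relations 2) :
    rel2 fB fC wit r (Sum.inr c') (Sum.inl b) ↔
      Structure.RelMap r ![(wit b c').wc, (wit b c').wb] := by
  simp only [rel2]
  rw [dif_neg hb]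

/-- The left embedding into the amalgam. -/
def gBe : ↥B ↪[L] ↥(DB fB fC wit hbin) where
  toFun := Sum.inl
  inj' := fun _ _ h => Sum.inl.inj h
  map_fun' := fun f => isEmptyElim f
  map_rel' := by
    intro n r x
    match n with
    | 0 => exact relMap_zero_congr (M := ↥B) r ![] x
    | 1 => rw [fin1_eq x]; exact Iff.rfl
    | 2 => rw [fin2_eq x]; exact Iff.rfl
    | (n + 3) => exact ((hbin _ (by omega)).false r).elim

open Classical in
/-- The underlying function of the right embedding. -/
noncomputable def gCfun : ↥C → DC (B := B) (C := C) fC := fun c =>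
  if h : c ∈ Set.range fC then Sum.inl (fB h.choose) else Sum.inr ⟨c, h⟩

lemma gCfun_mem (a : ↥A) : gCfun fB fC (fC a) = Sum.inl (fB a) := by
  have h : fC a ∈ Set.range fC := ⟨a, rfl⟩
  unfold gCfun
  erw [dif_pos h]
  exact congrArg Sum.inl (congrArg fB (fC.injective h.choose_spec))

lemma gCfun_not_mem {c : ↥C} (h : c ∉ Set.range fC) :
    gCfun fB fC c = Sum.inr ⟨c, h⟩ := by
  unfold gCfun
  erw [dif_neg h]

lemma gCfun_inj : Function.Injective (gCfun (B := B) fB fC) := by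
  intro c c' hcc
  by_cases h1 : c ∈ Set.range fC <;> by_cases h2 : c' ∈ Set.range fC
  · obtain ⟨a, rfl⟩ := h1
    obtain ⟨a', rfl⟩ := h2
    rw [gCfun_mem, gCfun_mem] at hcc
    exact congrArg fC (fB.injective (Sum.inl.inj hcc))
  · obtain ⟨a, rfl⟩ := h1
    rw [gCfun_mem, gCfun_not_mem fB fC h2] at hcc
    exact (Sum.inl_ne_inr hcc).elim
  · obtain ⟨a', rfl⟩ := h2
    rw [gCfun_mem, gCfun_not_mem fB fC h1] at hcc
    exact (Sum.inr_ne_inl hcc).elim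
  · rw [gCfun_not_mem fB fC h1, gCfun_not_mem fB fC h2] at hcc
    exact congrArg Subtype.val (Sum.inr.inj hcc)

lemma gCfun_rel (n : ℕ) (r : L.Relations n) (x : Fin n → ↥C) :
    Structure.RelMap (M := ↥(DB fB fC wit hbin)) r (gCfun fB fC ∘ x) ↔
      Structure.RelMap r x := by
  match n with
  | 0 =>
    have hAB := fB.map_rel' r default
    have hAC := fC.map_rel' r default
    exact ((relMap_zero_congr r _ _).trans hAB).trans
      (hAC.symm.trans (relMap_zero_congr r _ x))
  | 1 =>
    rw [fin1_eq x]; erw [comp_fin1]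
    by_cases h1 : x 0 ∈ Set.range fC
    · obtain ⟨a, ha⟩ := h1
      rw [← ha, gCfun_mem]
      have h2 := fB.map_rel' r ![a]
      rw [comp_fin1] at h2
      have h3 := fC.map_rel' r ![a]
      rw [comp_fin1] at h3
      exact h2.trans h3.symm
    · rw [gCfun_not_mem fB fC h1]
      exact Iff.rfl
  | 2 =>
    rw [fin2_eq x]; erw [comp_fin2]
    by_cases h1 : x 0 ∈ Set.range fC <;> by_cases h2 : x 1 ∈ Set.range fC
    · obtain ⟨a0, ha0⟩ := h1
      obtain ⟨a1, ha1⟩ := h2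
      rw [← ha0, ← ha1, gCfun_mem, gCfun_mem]
      have h3 := fB.map_rel' r ![a0, a1]
      rw [comp_fin2] at h3
      have h4 := fC.map_rel' r ![a0, a1]
      rw [comp_fin2] at h4
      exact h3.trans h4.symm
    · obtain ⟨a0, ha0⟩ := h1
      rw [← ha0, gCfun_mem, gCfun_not_mem fB fC h2]
      erw [relMap_DB_two, rel2_inl_inr_mem]
    · obtain ⟨a1, ha1⟩ := h2
      rw [← ha1, gCfun_mem, gCfun_not_mem fB fC h1]
      erw [relMap_DB_two, rel2_inr_inl_mem]
    · rw [gCfun_not_mem fB fC h1, gCfun_not_mem fB fC h2]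
      exact Iff.rfl
  | (n + 3) => exact ((hbin _ (by omega)).false r).elim

/-- The right embedding into the amalgam. -/
noncomputable def gCe : ↥C ↪[L] ↥(DB fB fC wit hbin) :=
  ⟨⟨gCfun fB fC, gCfun_inj fB fC⟩, fun f => isEmptyElim f,
    fun {n} r x => gCfun_rel fB fC wit hbin n r x⟩

lemma D_cases (d : ↥(DB fB fC wit hbin)) :
    (∃ b : ↥B, d = Sum.inl b) ∨ ∃ c : {c : ↥C // c ∉ Set.range fC}, d = Sum.inr c := by
  cases d with
  | inl b => exact Or.inl ⟨b, rfl⟩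
  | inr c => exact Or.inr ⟨c, rfl⟩

/-- The mixed two-element substructures of the amalgam are isomorphic to members of `P`. -/
lemma mixed_case (hP : OneAdequate L P) (S : L.Substructure ↥(DB fB fC wit hbin))
    {b : ↥B} (hb : b ∉ Set.range fB) (c : {c : ↥C // c ∉ Set.range fC})
    (hd : (S : Set ↥(DB fB fC wit hbin)) = {Sum.inl b, Sum.inr c}) :
    ∃ Q ∈ P, Nonempty (↥S ≃[L] ↥Q) := by
  classical
  set w := wit b (c : ↥C) with hw
  set T : L.Substructure ↥w.W := setSub {w.wb, w.wc} with hT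
  have memwb : w.wb ∈ T := Or.inl rfl
  have memwc : w.wc ∈ T := Or.inr rfl
  have memb : (Sum.inl b : ↥(DB fB fC wit hbin)) ∈ S := by
    erw [← SetLike.mem_coe, hd]; exact Or.inl rfl
  have memc : (Sum.inr c : ↥(DB fB fC wit hbin)) ∈ S := by
    erw [← SetLike.mem_coe, hd]; exact Or.inr rfl
  have hx : ∀ x : ↥S, (x : ↥(DB fB fC wit hbin)) = Sum.inl b ∨
      (x : ↥(DB fB fC wit hbin)) = Sum.inr c := by
    intro x
    have h := x.2
    rw [← SetLike.mem_coe, hd] at h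
    exact h
  have hy : ∀ y : ↥T, (y : ↥w.W) = w.wb ∨ (y : ↥w.W) = w.wc := fun y => y.2
  set F : ↥S → ↥T := fun x =>
    if (x : ↥(DB fB fC wit hbin)) = Sum.inl b then ⟨w.wb, memwb⟩ else ⟨w.wc, memwc⟩ with hF
  set G : ↥T → ↥S := fun y =>
    if (y : ↥w.W) = w.wb then ⟨Sum.inl b, memb⟩ else ⟨Sum.inr c, memc⟩ with hG
  have hF1 : ∀ x : ↥S, (x : ↥(DB fB fC wit hbin)) = Sum.inl b → F x = ⟨w.wb, memwb⟩ :=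
    fun x h => by rw [hF]; exact if_pos h
  have hF2 : ∀ x : ↥S, (x : ↥(DB fB fC wit hbin)) = Sum.inr c → F x = ⟨w.wc, memwc⟩ :=
    fun x h => by
      rw [hF]
      exact if_neg (by rw [h]; exact fun hcon => Sum.inr_ne_inl hcon)
  have hG1 : ∀ y : ↥T, (y : ↥w.W) = w.wb → G y = ⟨Sum.inl b, memb⟩ :=
    fun y h => by rw [hG]; exact if_pos h
  have hG2 : ∀ y : ↥T, (y : ↥w.W) = w.wc → G y = ⟨Sum.inr c, memc⟩ :=
    fun y h => by
      rw [hG]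
      exact if_neg (by rw [h]; exact fun hcon => w.hne hcon.symm)
  have hgf : Function.LeftInverse G F := by
    intro x
    rcases hx x with h | h
    · rw [hF1 x h, hG1 _ rfl]
      exact Subtype.ext h.symm
    · rw [hF2 x h, hG2 _ rfl]
      exact Subtype.ext h.symm
  have hfg : Function.RightInverse G F := by
    intro y
    rcases hy y with h | h
    · rw [hG1 y h, hF1 _ rfl]
      exact Subtype.ext h.symm
    · rw [hG2 y h, hF2 _ rfl]
      exact Subtype.ext h.symm
  have hmr : ∀ (n : ℕ) (r : L.Relations n) (x : Fin n → ↥S),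
      Structure.RelMap (M := ↥T) r (F ∘ x) ↔ Structure.RelMap r x := by
    intro n r x
    match n with
    | 0 => exact (relMap_zero_congr (M := ↥w.W) r _ ![]).trans (w.h0 r)
    | 1 =>
      rw [fin1_eq x, comp_fin1, relMap_sub_one, relMap_sub_one]
      rcases hx (x 0) with h | h
      · rw [hF1 _ h, h]
        exact w.hb1 r
      · rw [hF2 _ h, h]
        exact w.hc1 r
    | 2 =>
      rw [fin2_eq x, comp_fin2, relMap_sub_two, relMap_sub_two]
      rcases hx (x 0) with h0 | h0 <;> rcases hx (x 1) with h1 | h1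
      · rw [hF1 _ h0, hF1 _ h1, h0, h1]
        exact w.hb2 r
      · rw [hF1 _ h0, hF2 _ h1, h0, h1]; erw [relMap_DB_two,
          rel2_inl_inr_not_mem fB fC wit hb]
      · rw [hF2 _ h0, hF1 _ h1, h0, h1]; erw [relMap_DB_two,
          rel2_inr_inl_not_mem fB fC wit hb]
      · rw [hF2 _ h0, hF2 _ h1, h0, h1]
        exact w.hc2 r
    | (n + 3) => exact ((hbin _ (by omega)).false r).elim
  have e : ↥S ≃[L] ↥T :=
    ⟨⟨F, G, hgf, hfg⟩, fun f => isEmptyElim f, fun {n} r x => hmr n r x⟩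
  exact ⟨Bundled.of ↥T, hP.2.2.1 w.W w.hW T, ⟨e⟩⟩

/-- The amalgam belongs to `RP L P`. -/
lemma DB_mem_RP (hP : OneAdequate L P) (hB : B ∈ RP L P) (hC : C ∈ RP L P) :
    DB fB fC wit hbin ∈ RP L P := by
  classical
  constructor
  · have h1 : Finite ↥B := hB.1
    have h2 : Finite ↥C := hC.1
    show Finite (↥B ⊕ {c : ↥C // c ∉ Set.range fC})
    infer_instance
  · intro S hcard
    have hs : Nat.card ↥S = (S : Set ↥(DB fB fC wit hbin)).ncard := by
      rw [← Nat.card_coe_set_eq]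
      exact Nat.card_congr (Equiv.subtypeEquivRight fun x => Iff.rfl)
    have hinrC : ∀ c : {c : ↥C // c ∉ Set.range fC},
        (Sum.inr c : ↥(DB fB fC wit hbin)) ∈ Set.range (gCe fB fC wit hbin) := by
      intro c
      refine ⟨(c : ↥C), ?_⟩
      show gCfun fB fC (c : ↥C) = Sum.inr c
      rw [gCfun_not_mem fB fC c.2]
    have hinlB : ∀ b : ↥B,
        (Sum.inl b : ↥(DB fB fC wit hbin)) ∈ Set.range (gBe fB fC wit hbin) :=
      fun b => ⟨b, rfl⟩
    have hinlC : ∀ b : ↥B, b ∈ Set.range fB →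
        (Sum.inl b : ↥(DB fB fC wit hbin)) ∈ Set.range (gCe fB fC wit hbin) := by
      rintro b ⟨a, rfl⟩
      refine ⟨fC a, ?_⟩
      show gCfun fB fC (fC a) = Sum.inl (fB a)
      exact gCfun_mem fB fC a
    rcases hcard with h1 | h2
    · obtain ⟨d, hd⟩ := Set.ncard_eq_one.1 (by rw [← hs]; exact h1)
      rcases D_cases fB fC wit hbin d with ⟨b, rfl⟩ | ⟨c, rfl⟩
      · refine mem_of_subset_range hB (gBe fB fC wit hbin) S ?_ (Or.inl h1)
        rw [hd]
        rintro z hz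
        erw [Set.mem_singleton_iff] at hz
        subst hz
        exact hinlB b
      · refine mem_of_subset_range hC (gCe fB fC wit hbin) S ?_ (Or.inl h1)
        rw [hd]
        rintro z hz
        erw [Set.mem_singleton_iff] at hz
        subst hz
        exact hinrC c
    · obtain ⟨d0, d1, hne, hd⟩ := Set.ncard_eq_two.1 (by rw [← hs]; exact h2)
      rcases D_cases fB fC wit hbin d0 with ⟨b0, rfl⟩ | ⟨c0, rfl⟩ <;>
        rcases D_cases fB fC wit hbin d1 with ⟨b1, rfl⟩ | ⟨c1, rfl⟩
      · refine mem_of_subset_range hB (gBe fB fC wit hbin) S ?_ (Or.inr h2)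
        rw [hd]
        rintro z (rfl | rfl)
        exacts [hinlB b0, hinlB b1]
      · by_cases hbr : b0 ∈ Set.range fB
        · refine mem_of_subset_range hC (gCe fB fC wit hbin) S ?_ (Or.inr h2)
          rw [hd]
          rintro z (rfl | rfl)
          exacts [hinlC b0 hbr, hinrC c1]
        · exact mixed_case fB fC wit hbin hP S hbr c1 hd
      · by_cases hbr : b1 ∈ Set.range fB
        · refine mem_of_subset_range hC (gCe fB fC wit hbin) S ?_ (Or.inr h2)
          rw [hd]
          rintro z (rfl | rfl)
          exacts [hinrC c0, hinlC b1 hbr]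
        · erw [Set.pair_comm] at hd
          exact mixed_case fB fC wit hbin hP S hbr c0 hd
      · refine mem_of_subset_range hC (gCe fB fC wit hbin) S ?_ (Or.inr h2)
        rw [hd]
        rintro z (rfl | rfl)
        exacts [hinrC c0, hinrC c1]


end Construction

end Statement2Aux

/-- If `L` is a finite relational language with all relation symbols of arity at most 2 and
`P` is a 1-adequate class of finite `L`-structures, then `RP L P` has the amalgamation
property. -/
theorem statement2 {L : FirstOrder.Language} [L.IsRelational]
    (hfinL : ∀ n, Finite (L.Relations n))
    (hbin : ∀ n, 2 < n → IsEmpty (L.Relations n))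
    (P : Set (Bundled L.Structure)) (hP : OneAdequate L P) :
    ∀ (A B C : Bundled L.Structure) (fB : A ↪[L] B) (fC : A ↪[L] C),
      A ∈ RP L P → B ∈ RP L P → C ∈ RP L P →
      ∃ (D : Bundled L.Structure) (gB : B ↪[L] D) (gC : C ↪[L] D),
        D ∈ RP L P ∧ gB.comp fB = gC.comp fC := by
  intro A B C fB fC hA hB hC
  classical
  have wit : ∀ (b : ↥B) (c : ↥C), Statement2Aux.Wit P B C b c := fun b c =>
    Classical.choice (Statement2Aux.wit_nonempty hP hB hC b c)
  have hD0 := Statement2Aux.DB_mem_RP fB fC wit hbin hP hB hC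
  have hfin : Finite ↥(Statement2Aux.DB fB fC wit hbin) := hD0.1
  obtain ⟨n, ⟨e0⟩⟩ := Finite.exists_equiv_fin ↥(Statement2Aux.DB fB fC wit hbin)
  let e : ↥(Statement2Aux.DB fB fC wit hbin) ≃ ULift (Fin n) := e0.trans Equiv.ulift.symm
  letI : L.Structure (ULift (Fin n)) := Equiv.inducedStructure e
  let D : Bundled L.Structure := Bundled.of (ULift (Fin n))
  let E : ↥(Statement2Aux.DB fB fC wit hbin) ≃[L] ↥D := Equiv.inducedStructureEquiv e
  refine ⟨D, E.toEmbedding.comp (Statement2Aux.gBe fB fC wit hbin),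
    E.toEmbedding.comp (Statement2Aux.gCe fB fC wit hbin),
    Statement2Aux.RP_iso hD0 E, ?_⟩
  refine FirstOrder.Language.Embedding.ext fun a => ?_
  show E ((Statement2Aux.gBe fB fC wit hbin) (fB a)) =
    E ((Statement2Aux.gCe fB fC wit hbin) (fC a))
  exact congrArg E (Statement2Aux.gCfun_mem fB fC a).symm
end

section
/- Let G be a simple graph on a vertex set V satisfying the extension property, and let M be the doubled graph of G on V × Bool. Then for all distinct vertices u = (a,i) and v = (b,j) of M: u and v have no common neighbor in M if and only if a = b. (Hence the equivalence relation identifying (a,0) with (a,1) is defined in M by the graph-theoretic condition 'x = y, or x ≠ y and x and y have no common neighbor'.) -/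
/-- The doubled graph of a simple graph `G` on `V`: its vertex set is `V × Bool`, and
`(a, i)` is adjacent to `(b, j)` iff either `i = j` and `a` is adjacent to `b` in `G`,
or `i ≠ j` and `a` is not adjacent to `b` in `G`. -/
def doubled {V : Type*} (G : SimpleGraph V) : SimpleGraph (V × Bool) where
  Adj u v := (u.2 = v.2 ∧ G.Adj u.1 v.1) ∨ (u.2 ≠ v.2 ∧ ¬ G.Adj u.1 v.1)
  symm := by
    constructor
    intro u v h
    rcases h with ⟨h1, h2⟩ | ⟨h1, h2⟩
    · exact Or.inl ⟨h1.symm, h2.symm⟩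
    · exact Or.inr ⟨h1.symm, fun h => h2 h.symm⟩
  loopless := by
    constructor
    intro u h
    rcases h with ⟨_, h2⟩ | ⟨h1, _⟩
    · exact G.irrefl h2
    · exact h1 rfl

/-- For a vertex `u = (a, i)` of the doubled graph, `prime u` is the vertex `(a, ¬i)`. -/
def prime {V : Type*} (u : V × Bool) : V × Bool := (u.1, !u.2)

/-- A simple graph `G` on `V` has the extension property if for all finite disjoint sets
`A, B ⊆ V` there is a vertex `c ∉ A ∪ B` adjacent to every vertex of `A` and to no vertex
of `B`. -/
def ExtensionProperty {V : Type*} (G : SimpleGraph V) : Prop :=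
  ∀ A B : Finset V, Disjoint A B →
    ∃ c, c ∉ A ∧ c ∉ B ∧ (∀ a ∈ A, G.Adj c a) ∧ ∀ b ∈ B, ¬ G.Adj c b

/-- If `G` has the extension property and `M` is the doubled graph of `G`, then two distinct
vertices `u, v` of `M` have no common neighbor in `M` if and only if they have the same first
coordinate. -/
theorem statement7 {V : Type*} (G : SimpleGraph V) (hG : ExtensionProperty G)
    (u v : V × Bool) (huv : u ≠ v) :
    (¬ ∃ w : V × Bool, (doubled G).Adj w u ∧ (doubled G).Adj w v) ↔ u.1 = v.1 := by
  classical
  obtain ⟨a, i⟩ := u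
  obtain ⟨b, j⟩ := v
  simp only [ne_eq, Prod.mk.injEq] at huv ⊢
  constructor
  · intro h
    by_contra hab
    rcases eq_or_ne i j with hij | hij
    · obtain ⟨c, -, -, hA, -⟩ := hG {a, b} ∅ (Finset.disjoint_empty_right _)
      exact h ⟨(c, i), Or.inl ⟨rfl, hA a (by simp)⟩,
        Or.inl ⟨hij, hA b (by simp)⟩⟩
    · obtain ⟨c, -, -, hA, hB⟩ := hG {a} {b} (by simp [Ne.symm hab, hab])
      exact h ⟨(c, i), Or.inl ⟨rfl, hA a (by simp)⟩,
        Or.inr ⟨hij, hB b (by simp)⟩⟩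
  · rintro rfl
    have hij : i ≠ j := fun h => huv ⟨rfl, h⟩
    rintro ⟨⟨c, k⟩, hu, hv⟩
    rcases hu with ⟨h1, h2⟩ | ⟨h1, h2⟩ <;> rcases hv with ⟨g1, g2⟩ | ⟨g1, g2⟩ <;> cases i <;> cases j <;> cases k <;>
      simp_all
end

section
/- Let G be a simple graph on a countable vertex set V satisfying the extension property, and let M be the doubled graph of G on V × Bool. Let S, T ⊆ V × Bool be finite sets each closed under the operation u ↦ u', and let f be an isomorphism between the induced subgraphs of M on S and on T such that f(u') = (f(u))' for all u ∈ S. Then f extends to an automorphism of the graph M. -/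
namespace Statement9Aux

variable {V : Type*}

lemma adj_doubled {G : SimpleGraph V} {u v : V × Bool} :
    (doubled G).Adj u v ↔ (u.2 = v.2 ∧ G.Adj u.1 v.1) ∨ (u.2 ≠ v.2 ∧ ¬ G.Adj u.1 v.1) :=
  Iff.rfl

lemma prime_prime (u : V × Bool) : prime (prime u) = u := by simp [prime]

lemma prime_ne (u : V × Bool) : prime u ≠ u := by
  rcases u with ⟨a, i⟩
  simp [prime]

lemma adj_prime_right (G : SimpleGraph V) (u v : V × Bool) :
    (doubled G).Adj u (prime v) ↔ ¬ (doubled G).Adj u v := by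
  rcases u with ⟨a, i⟩; rcases v with ⟨b, j⟩
  simp only [adj_doubled, prime]
  cases i <;> cases j <;> simp

lemma adj_prime_left (G : SimpleGraph V) (u v : V × Bool) :
    (doubled G).Adj (prime u) v ↔ ¬ (doubled G).Adj u v := by
  rw [SimpleGraph.adj_comm, adj_prime_right, SimpleGraph.adj_comm]

structure PIso (G : SimpleGraph V) where
  S : Set (V × Bool)
  T : Set (V × Bool)
  f : V × Bool → V × Bool
  finS : S.Finite
  finT : T.Finite
  clS : ∀ u ∈ S, prime u ∈ S
  clT : ∀ u ∈ T, prime u ∈ T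
  bij : Set.BijOn f S T
  adj : ∀ u ∈ S, ∀ v ∈ S, (doubled G).Adj u v ↔ (doubled G).Adj (f u) (f v)
  pr : ∀ u ∈ S, f (prime u) = prime (f u)

variable {G : SimpleGraph V}

def PIso.Le (p q : PIso G) : Prop := p.S ⊆ q.S ∧ Set.EqOn p.f q.f p.S

lemma PIso.Le.rfl (p : PIso G) : p.Le p := ⟨subset_rfl, fun _ _ => Eq.refl _⟩

lemma PIso.Le.trans {p q r : PIso G} (h1 : p.Le q) (h2 : q.Le r) : p.Le r :=
  ⟨h1.1.trans h2.1, fun x hx => (h1.2 hx).trans (h2.2 (h1.1 hx))⟩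

lemma extend_fwd (hG : ExtensionProperty G) (p : PIso G) (w : V × Bool) :
    ∃ q : PIso G, p.Le q ∧ w ∈ q.S ∧ p.T ⊆ q.T := by
  classical
  by_cases hw : w ∈ p.S
  · exact ⟨p, PIso.Le.rfl p, hw, subset_rfl⟩
  have hw' : prime w ∉ p.S := fun h => hw (by simpa [prime_prime] using p.clS _ h)
  -- the predicate deciding which side each image vertex should be on
  set P : (V × Bool) → Prop := fun u => ((p.f u).2 = w.2 ↔ (doubled G).Adj w u) with hP
  have bool_ne : ∀ a b : Bool, ((!a) = b) ↔ ¬ (a = b) := by decide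
  have hPprime : ∀ u ∈ p.S, (P (prime u) ↔ P u) := by
    intro u hu
    have h1 : p.f (prime u) = prime (p.f u) := p.pr u hu
    have h2 : (doubled G).Adj w (prime u) ↔ ¬ (doubled G).Adj w u := adj_prime_right G w u
    show ((p.f (prime u)).2 = w.2 ↔ _) ↔ ((p.f u).2 = w.2 ↔ _)
    rw [h1]
    show ((!(p.f u).2) = w.2 ↔ _) ↔ _
    rw [bool_ne, h2]
    exact not_iff_not
  set Aset : Finset V := (p.finS.toFinset.filter P).image (fun u => (p.f u).1) with hA
  set Bset : Finset V := (p.finS.toFinset.filter (fun u => ¬ P u)).image (fun u => (p.f u).1)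
    with hB
  have hdisj : Disjoint Aset Bset := by
    rw [Finset.disjoint_left]
    rintro d hdA hdB
    simp only [hA, hB, Finset.mem_image, Finset.mem_filter, Set.Finite.mem_toFinset] at hdA hdB
    obtain ⟨u₁, ⟨hu₁, hPu₁⟩, hd₁⟩ := hdA
    obtain ⟨u₂, ⟨hu₂, hPu₂⟩, hd₂⟩ := hdB
    by_cases hk : (p.f u₁).2 = (p.f u₂).2
    · have : p.f u₁ = p.f u₂ := Prod.ext (hd₁.trans hd₂.symm) hk
      have : u₁ = u₂ := p.bij.injOn hu₁ hu₂ this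
      exact hPu₂ (this ▸ hPu₁)
    · have hfk : p.f u₁ = prime (p.f u₂) := by
        have hsnd : (p.f u₁).2 = (prime (p.f u₂)).2 := by
          show (p.f u₁).2 = !(p.f u₂).2
          rcases e1 : (p.f u₁).2 <;> rcases e2 : (p.f u₂).2 <;> simp_all
        exact Prod.ext (hd₁.trans hd₂.symm) hsnd
      have : p.f u₁ = p.f (prime u₂) := by rw [p.pr u₂ hu₂, hfk]
      have : u₁ = prime u₂ := p.bij.injOn hu₁ (p.clS u₂ hu₂) this
      exact hPu₂ ((hPprime u₂ hu₂).1 (this ▸ hPu₁))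
  obtain ⟨c, hcA, hcB, hcadj, hcnadj⟩ := hG Aset Bset hdisj
  -- the chosen c works
  have hc_cond : ∀ u ∈ p.S, (G.Adj c (p.f u).1 ↔ P u) := by
    intro u hu
    by_cases hPu : P u
    · have : (p.f u).1 ∈ Aset := by
        simp only [hA, Finset.mem_image, Finset.mem_filter, Set.Finite.mem_toFinset]
        exact ⟨u, ⟨hu, hPu⟩, rfl⟩
      exact iff_of_true (hcadj _ this) hPu
    · have : (p.f u).1 ∈ Bset := by
        simp only [hB, Finset.mem_image, Finset.mem_filter, Set.Finite.mem_toFinset]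
        exact ⟨u, ⟨hu, hPu⟩, rfl⟩
      exact iff_of_false (hcnadj _ this) hPu
  have hc_new : ∀ u ∈ p.S, (p.f u).1 ≠ c := by
    intro u hu hc
    by_cases hPu : P u
    · exact hcA (by simp only [hA, Finset.mem_image, Finset.mem_filter,
        Set.Finite.mem_toFinset]; exact ⟨u, ⟨hu, hPu⟩, hc⟩)
    · exact hcB (by simp only [hB, Finset.mem_image, Finset.mem_filter,
        Set.Finite.mem_toFinset]; exact ⟨u, ⟨hu, hPu⟩, hc⟩)
  have hcT : ∀ k : Bool, (c, k) ∉ p.T := by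
    intro k hk
    obtain ⟨u, hu, hfu⟩ := p.bij.surjOn hk
    exact hc_new u hu (by rw [hfu])
  -- the key adjacency fact
  have key : ∀ u ∈ p.S, ((doubled G).Adj w u ↔ (doubled G).Adj (c, w.2) (p.f u)) := by
    intro u hu
    have h1 : G.Adj c (p.f u).1 ↔ ((p.f u).2 = w.2 ↔ (doubled G).Adj w u) := hc_cond u hu
    have hRHS : (doubled G).Adj (c, w.2) (p.f u) ↔
        (w.2 = (p.f u).2 ∧ G.Adj c (p.f u).1) ∨ (w.2 ≠ (p.f u).2 ∧ ¬ G.Adj c (p.f u).1) :=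
      Iff.rfl
    rw [hRHS]
    by_cases he : (p.f u).2 = w.2
    · rw [he] at h1
      simp only [iff_true_intro rfl, true_iff] at h1
      constructor
      · intro hX
        exact Or.inl ⟨he.symm, h1.2 hX⟩
      · rintro (⟨_, hAc⟩ | ⟨hne, _⟩)
        · exact h1.1 hAc
        · exact absurd he.symm hne
    · have he' : w.2 ≠ (p.f u).2 := fun h => he h.symm
      have h1' : G.Adj c (p.f u).1 ↔ ¬ (doubled G).Adj w u := by
        constructor
        · intro hA hX
          exact he ((h1.1 hA).2 hX)
        · intro hnX
          exact h1.2 ⟨fun heq => (he heq).elim, fun hX => (hnX hX).elim⟩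
      constructor
      · intro hX
        exact Or.inr ⟨he', fun hA => (h1'.1 hA) hX⟩
      · rintro (⟨h, _⟩ | ⟨_, hnA⟩)
        · exact absurd h he'
        · by_contra hnX
          exact hnA (h1'.2 hnX)
  -- now build the extension
  classical
  set w' : V × Bool := prime w with hw'def
  set t : V × Bool := (c, w.2) with ht
  have hpt : prime t = (c, !w.2) := rfl
  set f' : V × Bool → V × Bool :=
    fun u => if u = w then t else if u = w' then prime t else p.f u with hf'
  set S' : Set (V × Bool) := insert w (insert w' p.S) with hS'
  set T' : Set (V × Bool) := insert t (insert (prime t) p.T) with hT'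
  have hw'w : w' ≠ w := prime_ne w
  have f'_w : f' w = t := if_pos rfl
  have f'_w' : f' w' = prime t := by simp [hf', hw'w]
  have f'_mem : ∀ u ∈ p.S, f' u = p.f u := by
    intro u hu
    rw [hf']
    simp only [if_neg (show u ≠ w from fun h => hw (h ▸ hu)),
      if_neg (show u ≠ w' from fun h => hw' (h ▸ hu))]
  have key2 : ∀ u ∈ p.S, ((doubled G).Adj w' u ↔ (doubled G).Adj (prime t) (p.f u)) := by
    intro u hu
    rw [hw'def, adj_prime_left, adj_prime_left, not_iff_not]
    exact key u hu
  have himg : ∀ u ∈ p.S, p.f u ≠ t ∧ p.f u ≠ prime t := by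
    intro u hu
    have hmem := p.bij.mapsTo hu
    constructor
    · intro h
      rw [h, ht] at hmem
      exact hcT w.2 hmem
    · intro h
      rw [h, hpt] at hmem
      exact hcT (!w.2) hmem
  have hSsub : p.S ⊆ S' := (Set.subset_insert _ _).trans (Set.subset_insert _ _)
  have hwS' : w ∈ S' := Set.mem_insert _ _
  have hw'S' : w' ∈ S' := Set.mem_insert_of_mem _ (Set.mem_insert _ _)
  have hww' : (doubled G).Adj w w' := by
    rw [hw'def, adj_prime_right]
    exact (doubled G).irrefl
  have htt' : (doubled G).Adj t (prime t) := by
    rw [adj_prime_right]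
    exact (doubled G).irrefl
  have K : ∀ v ∈ S', ((doubled G).Adj w v ↔ (doubled G).Adj (f' w) (f' v)) := by
    intro v hv
    rcases hv with hveq | hveq | hv
    · rw [hveq, f'_w]
      exact iff_of_false ((doubled G).irrefl) ((doubled G).irrefl)
    · rw [hveq, f'_w, f'_w']
      exact iff_of_true hww' htt'
    · rw [f'_w, f'_mem v hv]
      exact key v hv
  have K' : ∀ v ∈ S', ((doubled G).Adj w' v ↔ (doubled G).Adj (f' w') (f' v)) := by
    intro v hv
    rcases hv with hveq | hveq | hv
    · rw [hveq, f'_w', f'_w]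
      exact iff_of_true (hww'.symm) (htt'.symm)
    · rw [hveq, f'_w']
      exact iff_of_false ((doubled G).irrefl) ((doubled G).irrefl)
    · rw [f'_w', f'_mem v hv]
      exact key2 v hv
  refine ⟨⟨S', T', f', (p.finS.insert _).insert _, (p.finT.insert _).insert _, ?_, ?_, ?_, ?_, ?_⟩,
    ⟨hSsub, fun u hu => (f'_mem u hu).symm⟩, hwS',
    (Set.subset_insert _ _).trans (Set.subset_insert _ _)⟩
  · -- clS
    intro u hu
    rcases hu with hueq | hueq | hu
    · rw [hueq, ← hw'def]
      exact hw'S'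
    · rw [hueq, hw'def, prime_prime]
      exact hwS'
    · exact hSsub (p.clS u hu)
  · -- clT
    intro u hu
    rcases hu with hueq | hueq | hu
    · rw [hueq]
      exact Set.mem_insert_of_mem _ (Set.mem_insert _ _)
    · rw [hueq, prime_prime]
      exact Set.mem_insert _ _
    · exact Set.mem_insert_of_mem _ (Set.mem_insert_of_mem _ (p.clT u hu))
  · -- bij
    refine ⟨?_, ?_, ?_⟩
    · intro u hu
      rcases hu with hueq | hueq | hu
      · rw [hueq, f'_w]; exact Set.mem_insert _ _
      · rw [hueq, f'_w']; exact Set.mem_insert_of_mem _ (Set.mem_insert _ _)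
      · rw [f'_mem u hu]
        exact Set.mem_insert_of_mem _ (Set.mem_insert_of_mem _ (p.bij.mapsTo hu))
    · intro u hu v hv heq
      rcases hu with hueq | hueq | hu <;> rcases hv with hveq | hveq | hv
      · rw [hueq, hveq]
      · rw [hueq, f'_w, hveq, f'_w'] at heq
        exact absurd heq.symm (prime_ne t)
      · rw [hueq, f'_w, f'_mem v hv] at heq
        exact absurd heq.symm (himg v hv).1
      · rw [hueq, f'_w', hveq, f'_w] at heq
        exact absurd heq (prime_ne t)
      · rw [hueq, hveq]
      · rw [hueq, f'_w', f'_mem v hv] at heq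
        exact absurd heq.symm (himg v hv).2
      · rw [hveq, f'_w, f'_mem u hu] at heq
        exact absurd heq (himg u hu).1
      · rw [hveq, f'_w', f'_mem u hu] at heq
        exact absurd heq (himg u hu).2
      · rw [f'_mem u hu, f'_mem v hv] at heq
        exact p.bij.injOn hu hv heq
    · intro x hx
      rcases hx with hxeq | hxeq | hx
      · exact ⟨w, hwS', by rw [f'_w, hxeq]⟩
      · exact ⟨w', hw'S', by rw [f'_w', hxeq]⟩
      · obtain ⟨u, hu, hfu⟩ := p.bij.surjOn hx
        exact ⟨u, hSsub hu, by rw [f'_mem u hu]; exact hfu⟩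
  · -- adj
    intro u hu v hv
    rcases hu with hueq | hueq | hu
    · rw [hueq]
      exact K v hv
    · rw [hueq]
      exact K' v hv
    · rcases hv with hveq | hveq | hv
      · rw [hveq]
        exact ((doubled G).adj_comm u w).trans
          ((K u (hSsub hu)).trans ((doubled G).adj_comm (f' w) (f' u)))
      · rw [hveq]
        exact ((doubled G).adj_comm u w').trans
          ((K' u (hSsub hu)).trans ((doubled G).adj_comm (f' w') (f' u)))
      · rw [f'_mem u hu, f'_mem v hv]
        exact p.adj u hu v hv
  · -- pr
    intro u hu
    rcases hu with hueq | hueq | hu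
    · rw [hueq, show prime w = w' from hw'def.symm, f'_w', f'_w]
    · rw [hueq, hw'def, prime_prime, f'_w, f'_w', prime_prime]
    · rw [f'_mem u hu, f'_mem _ (p.clS u hu)]
      exact p.pr u hu


noncomputable def PIso.symm [Nonempty (V × Bool)] (p : PIso G) : PIso G where
  S := p.T
  T := p.S
  f := Function.invFunOn p.f p.S
  finS := p.finT
  finT := p.finS
  clS := p.clT
  clT := p.clS
  bij := Set.BijOn.symm p.bij.invOn_invFunOn.symm p.bij
  adj := by
    intro u hu v hv
    set g := Function.invFunOn p.f p.S with hg
    have hinv := p.bij.invOn_invFunOn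
    have hgu : g u ∈ p.S := (Set.BijOn.symm hinv.symm p.bij).mapsTo hu
    have hgv : g v ∈ p.S := (Set.BijOn.symm hinv.symm p.bij).mapsTo hv
    have h1 : p.f (g u) = u := hinv.2 hu
    have h2 : p.f (g v) = v := hinv.2 hv
    have := p.adj (g u) hgu (g v) hgv
    rw [h1, h2] at this
    exact this.symm
  pr := by
    intro u hu
    set g := Function.invFunOn p.f p.S with hg
    have hinv := p.bij.invOn_invFunOn
    have hgu : g u ∈ p.S := (Set.BijOn.symm hinv.symm p.bij).mapsTo hu
    have h1 : p.f (prime (g u)) = prime u := by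
      rw [p.pr _ hgu, hinv.2 hu]
    have h2 : g (p.f (prime (g u))) = prime (g u) := hinv.1 (p.clS _ hgu)
    rw [h1] at h2
    exact h2

lemma PIso.symm_S [Nonempty (V × Bool)] (p : PIso G) : p.symm.S = p.T := by rfl

lemma PIso.symm_T [Nonempty (V × Bool)] (p : PIso G) : p.symm.T = p.S := by rfl

lemma PIso.symm_f_f [Nonempty (V × Bool)] (p : PIso G) (u : V × Bool) (hu : u ∈ p.S) :
    p.symm.f (p.f u) = u := p.bij.invOn_invFunOn.1 hu

lemma extend_bwd [Nonempty (V × Bool)] (hG : ExtensionProperty G) (p : PIso G) (w : V × Bool) :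
    ∃ q : PIso G, p.Le q ∧ w ∈ q.T := by
  obtain ⟨q', hle', hw', hT'⟩ := extend_fwd hG p.symm w
  refine ⟨q'.symm, ⟨?_, ?_⟩, ?_⟩
  · intro u hu
    rw [PIso.symm_S]
    exact hT' (by rw [p.symm_T]; exact hu)
  · intro u hu
    have htu : p.f u ∈ q'.S := hle'.1 (by rw [p.symm_S]; exact p.bij.mapsTo hu)
    have h1 : q'.f (p.f u) = u := by
      rw [← hle'.2 (by rw [p.symm_S]; exact p.bij.mapsTo hu)]
      exact p.symm_f_f u hu
    have h2 := q'.symm_f_f (p.f u) htu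
    rw [h1] at h2
    exact h2.symm
  · rw [PIso.symm_T]
    exact hw'

lemma extend_two [Nonempty (V × Bool)] (hG : ExtensionProperty G) (p : PIso G) (w : V × Bool) :
    ∃ q : PIso G, p.Le q ∧ w ∈ q.S ∧ w ∈ q.T := by
  obtain ⟨q1, h1, hw1, _⟩ := extend_fwd hG p w
  obtain ⟨q2, h2, hw2⟩ := extend_bwd hG q1 w
  exact ⟨q2, h1.trans h2, h2.1 hw1, hw2⟩

noncomputable def seqP [Nonempty (V × Bool)] (hG : ExtensionProperty G) (p0 : PIso G)
    (e : ℕ → V × Bool) : ℕ → PIso G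
  | 0 => p0
  | n + 1 => Classical.choose (extend_two hG (seqP hG p0 e n) (e n))

lemma seqP_succ [Nonempty (V × Bool)] (hG : ExtensionProperty G) (p0 : PIso G)
    (e : ℕ → V × Bool) (n : ℕ) :
    (seqP hG p0 e n).Le (seqP hG p0 e (n + 1)) ∧
      e n ∈ (seqP hG p0 e (n + 1)).S ∧ e n ∈ (seqP hG p0 e (n + 1)).T := by
  rw [seqP]
  exact Classical.choose_spec (extend_two hG (seqP hG p0 e n) (e n))

lemma seqP_mono [Nonempty (V × Bool)] (hG : ExtensionProperty G) (p0 : PIso G)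
    (e : ℕ → V × Bool) {m n : ℕ} (h : m ≤ n) :
    (seqP hG p0 e m).Le (seqP hG p0 e n) := by
  induction n, h using Nat.le_induction with
  | base => exact PIso.Le.rfl _
  | succ n hmn ih => exact ih.trans (seqP_succ hG p0 e n).1

lemma seqP_coherent [Nonempty (V × Bool)] (hG : ExtensionProperty G) (p0 : PIso G)
    (e : ℕ → V × Bool) {m n : ℕ} {v : V × Bool}
    (hm : v ∈ (seqP hG p0 e m).S) (hn : v ∈ (seqP hG p0 e n).S) :
    (seqP hG p0 e m).f v = (seqP hG p0 e n).f v := by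
  have h1 := (seqP_mono hG p0 e (le_max_left m n)).2 hm
  have h2 := (seqP_mono hG p0 e (le_max_right m n)).2 hn
  rw [h1, h2]

end Statement9Aux

open Statement9Aux in
/-- Let `G` be a simple graph on a countable vertex set with the extension property and let
`M` be its doubled graph. If `S, T ⊆ V × Bool` are finite sets closed under `prime` and
`f` is an isomorphism between the induced subgraphs of `M` on `S` and on `T` (a bijection
from `S` onto `T` preserving adjacency and non-adjacency) commuting with `prime`, then `f`
extends to an automorphism of `M`. -/
theorem statement9 {V : Type*} [Countable V] (G : SimpleGraph V) (hG : ExtensionProperty G)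
    (S T : Set (V × Bool)) (hSfin : S.Finite) (hTfin : T.Finite)
    (hScl : ∀ u ∈ S, prime u ∈ S) (hTcl : ∀ u ∈ T, prime u ∈ T)
    (f : V × Bool → V × Bool) (hf : Set.BijOn f S T)
    (hadj : ∀ u ∈ S, ∀ v ∈ S, (doubled G).Adj u v ↔ (doubled G).Adj (f u) (f v))
    (hprime : ∀ u ∈ S, f (prime u) = prime (f u)) :
    ∃ σ : (doubled G) ≃g (doubled G), ∀ u ∈ S, σ u = f u := by
  classical
  rcases isEmpty_or_nonempty (V × Bool) with hemp | hne
  · exact ⟨⟨Equiv.refl _, Iff.rfl⟩, fun u _ => (IsEmpty.false u).elim⟩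
  obtain ⟨e, he⟩ := exists_surjective_nat (V × Bool)
  set p0 : PIso G := ⟨S, T, f, hSfin, hTfin, hScl, hTcl, hf, hadj, hprime⟩ with hp0
  set Q : ℕ → PIso G := seqP hG p0 e with hQ
  -- index of a vertex in the enumeration
  have hidx : ∀ v : V × Bool, ∃ n, e n = v := he
  set idx : (V × Bool) → ℕ := fun v => Nat.find (hidx v) with hidxdef
  have hidx_spec : ∀ v, e (idx v) = v := fun v => Nat.find_spec (hidx v)
  set F : (V × Bool) → (V × Bool) := fun v => (Q (idx v + 1)).f v with hF
  have hmemS : ∀ v, v ∈ (Q (idx v + 1)).S := by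
    intro v
    have := (seqP_succ hG p0 e (idx v)).2.1
    rwa [hidx_spec v] at this
  have hF_eq : ∀ n v, v ∈ (Q n).S → F v = (Q n).f v := by
    intro n v hv
    exact seqP_coherent hG p0 e (hmemS v) hv
  have hinj : Function.Injective F := by
    intro u v huv
    set n := max (idx u + 1) (idx v + 1) with hn
    have hu : u ∈ (Q n).S := (seqP_mono hG p0 e (le_max_left _ _)).1 (hmemS u)
    have hv : v ∈ (Q n).S := (seqP_mono hG p0 e (le_max_right _ _)).1 (hmemS v)
    have h1 : F u = (Q n).f u := hF_eq n u hu
    have h2 : F v = (Q n).f v := hF_eq n v hv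
    exact (Q n).bij.injOn hu hv (by rw [← h1, ← h2, huv])
  have hsurj : Function.Surjective F := by
    intro t
    have htT : t ∈ (Q (idx t + 1)).T := by
      have := (seqP_succ hG p0 e (idx t)).2.2
      rwa [hidx_spec t] at this
    obtain ⟨u, hu, hfu⟩ := (Q (idx t + 1)).bij.surjOn htT
    exact ⟨u, by rw [hF_eq (idx t + 1) u hu]; exact hfu⟩
  have hadjF : ∀ u v : V × Bool, (doubled G).Adj (F u) (F v) ↔ (doubled G).Adj u v := by
    intro u v
    set n := max (idx u + 1) (idx v + 1) with hn
    have hu : u ∈ (Q n).S := (seqP_mono hG p0 e (le_max_left _ _)).1 (hmemS u)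
    have hv : v ∈ (Q n).S := (seqP_mono hG p0 e (le_max_right _ _)).1 (hmemS v)
    rw [hF_eq n u hu, hF_eq n v hv]
    exact ((Q n).adj u hu v hv).symm
  refine ⟨⟨Equiv.ofBijective F ⟨hinj, hsurj⟩, ?_⟩, ?_⟩
  · intro u v
    exact hadjF u v
  · intro u hu
    have h0 : u ∈ (Q 0).S := hu
    have := hF_eq 0 u h0
    exact this
end

section
/- Let G be a simple graph on a countable vertex set V satisfying the extension property, and let M be the doubled graph of G on V × Bool. Then for all distinct a₁, a₂ ∈ V and all distinct b₁, b₂ ∈ V there exists an automorphism σ of M such that σ maps the set {a₁} × Bool onto {b₁} × Bool and the set {a₂} × Bool onto {b₂} × Bool. (In other words, the automorphism group of M acts transitively on ordered pairs of distinct classes of the equivalence relation identifying (a,0) with (a,1).) -/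
namespace Statement10Aux

variable {V : Type*}

lemma doubled_adj {G : SimpleGraph V} {u v : V × Bool} :
    (doubled G).Adj u v ↔
      (u.2 = v.2 ∧ G.Adj u.1 v.1) ∨ (u.2 ≠ v.2 ∧ ¬ G.Adj u.1 v.1) := Iff.rfl

/-- Switching a graph along a cut given by `s : V → Bool`. -/
def switch (G : SimpleGraph V) (s : V → Bool) : SimpleGraph V where
  Adj a b := (s a = s b ∧ G.Adj a b) ∨ (s a ≠ s b ∧ ¬ G.Adj a b)
  symm := by
    constructor
    intro a b h
    rcases h with ⟨h1, h2⟩ | ⟨h1, h2⟩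
    · exact Or.inl ⟨h1.symm, h2.symm⟩
    · exact Or.inr ⟨h1.symm, fun h => h2 h.symm⟩
  loopless := by
    constructor
    intro a h
    rcases h with ⟨_, h2⟩ | ⟨h1, _⟩
    · exact G.irrefl h2
    · exact h1 rfl

lemma switch_adj {G : SimpleGraph V} {s : V → Bool} {a b : V} :
    (switch G s).Adj a b ↔ (s a = s b ∧ G.Adj a b) ∨ (s a ≠ s b ∧ ¬ G.Adj a b) := Iff.rfl

lemma switch_false (G : SimpleGraph V) : switch G (fun _ => false) = G := by
  ext a b
  rw [switch_adj]
  simp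

/-- The canonical isomorphism between `doubled G` and `doubled (switch G s)`. -/
def flipIso (G : SimpleGraph V) (s : V → Bool) : doubled G ≃g doubled (switch G s) where
  toFun u := (u.1, xor (s u.1) u.2)
  invFun u := (u.1, xor (s u.1) u.2)
  left_inv u := by cases u with | mk a i => simp
  right_inv u := by cases u with | mk a i => simp
  map_rel_iff' := by
    rintro ⟨a, i⟩ ⟨b, j⟩
    show (doubled (switch G s)).Adj (a, xor (s a) i) (b, xor (s b) j) ↔
      (doubled G).Adj (a, i) (b, j)
    rw [doubled_adj, doubled_adj, switch_adj]
    by_cases hab : G.Adj a b <;>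
      cases hsa : s a <;> cases hsb : s b <;> cases i <;> cases j <;>
        simp [hsa, hsb, hab]

/-- A graph isomorphism induces an isomorphism of doubled graphs. -/
def doubledCongr {W : Type*} {G : SimpleGraph V} {H : SimpleGraph W} (φ : G ≃g H) :
    doubled G ≃g doubled H where
  toFun u := (φ u.1, u.2)
  invFun u := (φ.symm u.1, u.2)
  left_inv u := by cases u with | mk a i => simp
  right_inv u := by cases u with | mk a i => simp
  map_rel_iff' := by
    rintro ⟨a, i⟩ ⟨b, j⟩
    show (doubled H).Adj (φ a, i) (φ b, j) ↔ (doubled G).Adj (a, i) (b, j)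
    rw [doubled_adj, doubled_adj]
    simp [φ.map_adj_iff]

section BackAndForth

variable (G : SimpleGraph V)

/-- A finite partial isomorphism of `G`, recorded as a finite set of pairs. -/
def Good (P : Finset (V × V)) : Prop :=
  ∀ p ∈ P, ∀ q ∈ P, (p.1 = q.1 ↔ p.2 = q.2) ∧ (G.Adj p.1 q.1 ↔ G.Adj p.2 q.2)

lemma step_dom [DecidableEq V] (hG : ExtensionProperty G) {P : Finset (V × V)}
    (hP : Good G P) (x : V) :
    ∃ Q, P ⊆ Q ∧ Good G Q ∧ ∃ y, (x, y) ∈ Q := by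
  classical
  by_cases hx : ∃ y, (x, y) ∈ P
  · exact ⟨P, Finset.Subset.refl _, hP, hx⟩
  · set A := (P.filter fun p => G.Adj x p.1).image Prod.snd with hA
    set B := (P.filter fun p => ¬ G.Adj x p.1).image Prod.snd with hB
    have hmemA : ∀ p ∈ P, G.Adj x p.1 → p.2 ∈ A := fun p hp h =>
      Finset.mem_image_of_mem _ (Finset.mem_filter.mpr ⟨hp, h⟩)
    have hmemB : ∀ p ∈ P, ¬ G.Adj x p.1 → p.2 ∈ B := fun p hp h =>
      Finset.mem_image_of_mem _ (Finset.mem_filter.mpr ⟨hp, h⟩)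
    have hdisj : Disjoint A B := by
      rw [Finset.disjoint_left]
      intro y hyA hyB
      obtain ⟨p, hp, hp2⟩ := Finset.mem_image.mp hyA
      obtain ⟨q, hq, hq2⟩ := Finset.mem_image.mp hyB
      rw [Finset.mem_filter] at hp hq
      have h12 := (hP p hp.1 q hq.1).1.mpr (hp2.trans hq2.symm)
      exact hq.2 (h12 ▸ hp.2)
    obtain ⟨c, hcA, hcB, hc1, hc2⟩ := hG A B hdisj
    have hxne : ∀ p ∈ P, x ≠ p.1 := by
      intro p hp h
      exact hx ⟨p.2, by rwa [h, Prod.mk.eta]⟩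
    have hcne : ∀ p ∈ P, c ≠ p.2 := by
      intro p hp h
      by_cases hadj : G.Adj x p.1
      · exact hcA (h ▸ hmemA p hp hadj)
      · exact hcB (h ▸ hmemB p hp hadj)
    have hadj : ∀ p ∈ P, (G.Adj x p.1 ↔ G.Adj c p.2) := by
      intro p hp
      constructor
      · intro h; exact hc1 _ (hmemA p hp h)
      · intro h; by_contra h'
        exact hc2 _ (hmemB p hp h') h
    refine ⟨insert (x, c) P, Finset.subset_insert _ _, ?_, c, Finset.mem_insert_self _ _⟩
    intro p hp q hq
    rcases Finset.mem_insert.mp hp with rfl | hp <;> rcases Finset.mem_insert.mp hq with rfl | hq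
    · exact ⟨by simp, iff_of_false (G.loopless.irrefl x) (G.loopless.irrefl c)⟩
    · exact ⟨iff_of_false (hxne q hq) (hcne q hq), hadj q hq⟩
    · refine ⟨iff_of_false (fun h => hxne p hp h.symm) (fun h => hcne p hp h.symm), ?_⟩
      rw [G.adj_comm p.1 x, G.adj_comm p.2 c]
      exact hadj p hp
    · exact hP p hp q hq

lemma good_swap [DecidableEq V] {P : Finset (V × V)} (hP : Good G P) :
    Good G (P.image Prod.swap) := by
  intro p hp q hq
  obtain ⟨p', hp', rfl⟩ := Finset.mem_image.mp hp
  obtain ⟨q', hq', rfl⟩ := Finset.mem_image.mp hq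
  obtain ⟨h1, h2⟩ := hP p' hp' q' hq'
  exact ⟨h1.symm, h2.symm⟩

lemma step [DecidableEq V] (hG : ExtensionProperty G) {P : Finset (V × V)}
    (hP : Good G P) (x : V) :
    ∃ Q, P ⊆ Q ∧ Good G Q ∧ (∃ y, (x, y) ∈ Q) ∧ ∃ z, (z, x) ∈ Q := by
  obtain ⟨Q₁, hPQ₁, hQ₁, y, hy⟩ := step_dom G hG hP x
  obtain ⟨Q₂, hQ₁Q₂, hQ₂, z, hz⟩ := step_dom G hG (good_swap G hQ₁) x
  refine ⟨Q₂.image Prod.swap, ?_, good_swap G hQ₂, ⟨y, ?_⟩, ⟨z, ?_⟩⟩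
  · intro p hp
    exact Finset.mem_image.mpr ⟨p.swap, hQ₁Q₂ (Finset.mem_image_of_mem _ (hPQ₁ hp)),
      Prod.swap_swap p⟩
  · exact Finset.mem_image.mpr ⟨(y, x), hQ₁Q₂ (Finset.mem_image_of_mem _ hy), rfl⟩
  · exact Finset.mem_image.mpr ⟨(x, z), hz, rfl⟩

lemma homog [Countable V] (hG : ExtensionProperty G)
    {a₁ a₂ b₁ b₂ : V} (ha : a₁ ≠ a₂) (hb : b₁ ≠ b₂)
    (hadj : G.Adj a₁ a₂ ↔ G.Adj b₁ b₂) :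
    ∃ φ : G ≃g G, φ a₁ = b₁ ∧ φ a₂ = b₂ := by
  classical
  haveI : Nonempty V := ⟨a₁⟩
  obtain ⟨e, he⟩ := exists_surjective_nat V
  have good0 : Good G {(a₁, b₁), (a₂, b₂)} := by
    intro p hp q hq
    simp only [Finset.mem_insert, Finset.mem_singleton] at hp hq
    rcases hp with rfl | rfl <;> rcases hq with rfl | rfl
    · exact ⟨by simp, iff_of_false (G.loopless.irrefl _) (G.loopless.irrefl _)⟩
    · exact ⟨iff_of_false ha hb, hadj⟩
    · exact ⟨iff_of_false ha.symm hb.symm,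
        (G.adj_comm a₂ a₁).trans (hadj.trans (G.adj_comm b₁ b₂))⟩
    · exact ⟨by simp, iff_of_false (G.loopless.irrefl _) (G.loopless.irrefl _)⟩
  have key : ∀ P : Finset (V × V), Good G P → ∀ x : V,
      ∃ Q, P ⊆ Q ∧ Good G Q ∧ (∃ y, (x, y) ∈ Q) ∧ ∃ z, (z, x) ∈ Q :=
    fun P hP x => step G hG hP x
  choose F hF₁ hF₂ hF₃ hF₄ using key
  let seq : ℕ → {P : Finset (V × V) // Good G P} := fun n =>
    Nat.rec ⟨{(a₁, b₁), (a₂, b₂)}, good0⟩ (fun n p => ⟨F p.1 p.2 (e n), hF₂ p.1 p.2 (e n)⟩) n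
  have hseq_succ : ∀ n, (seq n).1 ⊆ (seq (n + 1)).1 := fun n => hF₁ _ _ _
  have hmono : ∀ {m n : ℕ}, m ≤ n → (seq m).1 ⊆ (seq n).1 := by
    intro m n h
    induction h with
    | refl => exact Finset.Subset.refl _
    | step h ih => exact ih.trans (hseq_succ _)
  have hdom : ∀ x : V, ∃ y n, (x, y) ∈ (seq n).1 := by
    intro x
    obtain ⟨k, rfl⟩ := he x
    obtain ⟨y, hy⟩ := hF₃ (seq k).1 (seq k).2 (e k)
    exact ⟨y, k + 1, hy⟩
  have hcod : ∀ y : V, ∃ x n, (x, y) ∈ (seq n).1 := by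
    intro y
    obtain ⟨k, rfl⟩ := he y
    obtain ⟨x, hx⟩ := hF₄ (seq k).1 (seq k).2 (e k)
    exact ⟨x, k + 1, hx⟩
  have huniq : ∀ {x y x' y' : V} {m n : ℕ}, (x, y) ∈ (seq m).1 → (x', y') ∈ (seq n).1 →
      ((x = x' ↔ y = y') ∧ (G.Adj x x' ↔ G.Adj y y')) := by
    intro x y x' y' m n hm hn
    have h1 : (x, y) ∈ (seq (max m n)).1 := hmono (le_max_left m n) hm
    have h2 : (x', y') ∈ (seq (max m n)).1 := hmono (le_max_right m n) hn
    exact (seq (max m n)).2 _ h1 _ h2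
  choose f nf hf using hdom
  choose g ng hg using hcod
  have hgf : ∀ x, g (f x) = x := fun x => (huniq (hg (f x)) (hf x)).1.mpr rfl
  have hfg : ∀ y, f (g y) = y := fun y => (huniq (hf (g y)) (hg y)).1.mp rfl
  have h0₁ : (a₁, b₁) ∈ (seq 0).1 := Finset.mem_insert_self _ _
  have h0₂ : (a₂, b₂) ∈ (seq 0).1 := Finset.mem_insert_of_mem (Finset.mem_singleton_self _)
  refine ⟨⟨⟨f, g, hgf, hfg⟩, ?_⟩, ?_, ?_⟩
  · intro x y
    exact ((huniq (hf x) (hf y)).2).symm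
  · exact (huniq (m := nf a₁) (n := 0) (hf a₁) h0₁).1.mp rfl
  · exact (huniq (m := nf a₂) (n := 0) (hf a₂) h0₂).1.mp rfl

end BackAndForth

lemma ext_switch [DecidableEq V] (G : SimpleGraph V) (hG : ExtensionProperty G) (v : V) :
    ExtensionProperty (switch G (fun x => decide (x = v))) := by
  intro A B hAB
  by_cases hvA : v ∈ A
  · have hdisj : Disjoint (A.erase v) (insert v B) := by
      rw [Finset.disjoint_left]
      intro a haA haB
      rcases Finset.mem_insert.mp haB with rfl | haB
      · exact (Finset.mem_erase.mp haA).1 rfl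
      · exact Finset.disjoint_left.mp hAB (Finset.mem_of_mem_erase haA) haB
    obtain ⟨c, hc1, hc2, hc3, hc4⟩ := hG (A.erase v) (insert v B) hdisj
    have hcv : c ≠ v := fun h => hc2 (h ▸ Finset.mem_insert_self v B)
    refine ⟨c, ?_, fun h => hc2 (Finset.mem_insert_of_mem h), ?_, ?_⟩
    · intro h
      exact hc1 (Finset.mem_erase.mpr ⟨hcv, h⟩)
    · intro a haA
      by_cases hav : a = v
      · subst hav
        exact Or.inr ⟨by simp [hcv], hc4 a (Finset.mem_insert_self _ _)⟩
      · exact Or.inl ⟨by simp [hcv, hav], hc3 a (Finset.mem_erase.mpr ⟨hav, haA⟩)⟩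
    · intro b hbB
      have hbv : b ≠ v := fun h => Finset.disjoint_left.mp hAB hvA (h ▸ hbB)
      rintro (⟨-, h2⟩ | ⟨h1, -⟩)
      · exact hc4 b (Finset.mem_insert_of_mem hbB) h2
      · exact h1 (by simp [hcv, hbv])
  · by_cases hvB : v ∈ B
    · have hdisj : Disjoint (insert v A) (B.erase v) := by
        rw [Finset.disjoint_left]
        intro a haA haB
        rcases Finset.mem_insert.mp haA with rfl | haA
        · exact (Finset.mem_erase.mp haB).1 rfl
        · exact Finset.disjoint_left.mp hAB haA (Finset.mem_of_mem_erase haB)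
      obtain ⟨c, hc1, hc2, hc3, hc4⟩ := hG (insert v A) (B.erase v) hdisj
      have hcv : c ≠ v := fun h => hc1 (h ▸ Finset.mem_insert_self v A)
      refine ⟨c, fun h => hc1 (Finset.mem_insert_of_mem h), ?_, ?_, ?_⟩
      · intro h
        exact hc2 (Finset.mem_erase.mpr ⟨hcv, h⟩)
      · intro a haA
        have hav : a ≠ v := fun h => hvA (h ▸ haA)
        exact Or.inl ⟨by simp [hcv, hav], hc3 a (Finset.mem_insert_of_mem haA)⟩
      · intro b hbB
        by_cases hbv : b = v
        · subst hbv
          rintro (⟨h1, -⟩ | ⟨-, h2⟩)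
          · simp [hcv] at h1
          · exact h2 (hc3 b (Finset.mem_insert_self _ _))
        · rintro (⟨-, h2⟩ | ⟨h1, -⟩)
          · exact hc4 b (Finset.mem_erase.mpr ⟨hbv, hbB⟩) h2
          · exact h1 (by simp [hcv, hbv])
    · have hdisj : Disjoint A (insert v B) := by
        rw [Finset.disjoint_left]
        intro a haA haB
        rcases Finset.mem_insert.mp haB with rfl | haB
        · exact hvA haA
        · exact Finset.disjoint_left.mp hAB haA haB
      obtain ⟨c, hc1, hc2, hc3, hc4⟩ := hG A (insert v B) hdisj
      have hcv : c ≠ v := fun h => hc2 (h ▸ Finset.mem_insert_self v B)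
      refine ⟨c, hc1, fun h => hc2 (Finset.mem_insert_of_mem h), ?_, ?_⟩
      · intro a haA
        have hav : a ≠ v := fun h => hvA (h ▸ haA)
        exact Or.inl ⟨by simp [hcv, hav], hc3 a haA⟩
      · intro b hbB
        have hbv : b ≠ v := fun h => hvB (h ▸ hbB)
        rintro (⟨-, h2⟩ | ⟨h1, -⟩)
        · exact hc4 b (Finset.mem_insert_of_mem hbB) h2
        · exact h1 (by simp [hcv, hbv])

end Statement10Aux

open Statement10Aux in
/-- Let `G` be a simple graph on a countable vertex set with the extension property and let
`M` be its doubled graph. Then for all distinct `a₁, a₂ ∈ V` and distinct `b₁, b₂ ∈ V` there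
is an automorphism of `M` mapping `{a₁} × Bool` onto `{b₁} × Bool` and `{a₂} × Bool` onto
`{b₂} × Bool`. -/
theorem statement10 {V : Type*} [Countable V] (G : SimpleGraph V) (hG : ExtensionProperty G)
    (a₁ a₂ b₁ b₂ : V) (ha : a₁ ≠ a₂) (hb : b₁ ≠ b₂) :
    ∃ σ : (doubled G) ≃g (doubled G),
      (fun u => σ u) '' (({a₁} : Set V) ×ˢ (Set.univ : Set Bool)) =
        ({b₁} : Set V) ×ˢ (Set.univ : Set Bool) ∧
      (fun u => σ u) '' (({a₂} : Set V) ×ˢ (Set.univ : Set Bool)) =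
        ({b₂} : Set V) ×ˢ (Set.univ : Set Bool) := by
  classical
  -- find a switching function making the adjacencies of the two pairs agree
  have hs : ∃ s : V → Bool, ExtensionProperty (switch G s) ∧
      ((switch G s).Adj a₁ a₂ ↔ (switch G s).Adj b₁ b₂) := by
    by_cases h : G.Adj a₁ a₂ ↔ G.Adj b₁ b₂
    · exact ⟨fun _ => false, by rw [switch_false]; exact hG, by rw [switch_false]; exact h⟩
    · have hv : ∃ v : V, (v = a₁ ∨ v = a₂) ∧ v ≠ b₁ ∧ v ≠ b₂ := by
        by_cases h1 : a₁ = b₁ ∨ a₁ = b₂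
        · by_cases h2 : a₂ = b₁ ∨ a₂ = b₂
          · exfalso
            rcases h1 with rfl | rfl <;> rcases h2 with rfl | rfl
            · exact ha rfl
            · exact h Iff.rfl
            · exact h ((G.adj_comm a₁ a₂).trans Iff.rfl)
            · exact ha rfl
          · push_neg at h2
            exact ⟨a₂, Or.inr rfl, h2⟩
        · push_neg at h1
          exact ⟨a₁, Or.inl rfl, h1⟩
      obtain ⟨v, hv1, hvb₁, hvb₂⟩ := hv
      refine ⟨fun x => decide (x = v), ext_switch G hG v, ?_⟩
      have hb' : (switch G (fun x => decide (x = v))).Adj b₁ b₂ ↔ G.Adj b₁ b₂ := by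
        rw [switch_adj]
        simp [Ne.symm hvb₁, Ne.symm hvb₂]
      have ha' : (switch G (fun x => decide (x = v))).Adj a₁ a₂ ↔ ¬ G.Adj a₁ a₂ := by
        rw [switch_adj]
        rcases hv1 with rfl | rfl
        · simp [Ne.symm ha]
        · simp [ha]
      rw [ha', hb']
      exact (not_iff.mp h)
  obtain ⟨s, hext, hadj⟩ := hs
  obtain ⟨φ, hφ₁, hφ₂⟩ := homog (switch G s) hext ha hb hadj
  let σ : doubled G ≃g doubled G :=
    (flipIso G s).trans ((doubledCongr φ).trans (flipIso G s).symm)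
  have hσ : ∀ (a : V) (i : Bool), σ (a, i) = (φ a, xor (s (φ a)) (xor (s a) i)) :=
    fun a i => rfl
  have himg : ∀ (a b : V), φ a = b →
      (fun u => σ u) '' (({a} : Set V) ×ˢ (Set.univ : Set Bool)) =
        ({b} : Set V) ×ˢ (Set.univ : Set Bool) := by
    intro a b hab
    ext ⟨x, j⟩
    simp only [Set.mem_image, Set.mem_prod, Set.mem_singleton_iff, Set.mem_univ, and_true]
    constructor
    · rintro ⟨⟨y, i⟩, hy, hmap⟩
      have hy' : y = a := hy
      subst hy'
      rw [hσ, hab] at hmap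
      injection hmap with h1 h2
      exact h1.symm
    · intro hx
      refine ⟨(a, xor (s a) (xor (s b) j)), rfl, ?_⟩
      rw [hσ, hab, hx]
      simp
  exact ⟨σ, himg a₁ b₁ hφ₁, himg a₂ b₂ hφ₂⟩
end

section
/- Let G be a simple graph on a vertex set V and let M be the doubled graph of G on V × Bool. Suppose u₁, u₂, u₃ ∈ V are distinct vertices such that u₁ is adjacent to u₂ in G, u₁ is adjacent to u₃ in G, and u₂ is not adjacent to u₃ in G. Then the induced subgraph of M on the six-element set {u₁, u₂, u₃} × Bool is triangle-free: it contains no three pairwise adjacent vertices. -/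
/-- If `u₁, u₂, u₃` are distinct vertices of `G` with `u₁ ~ u₂`, `u₁ ~ u₃` and `u₂ ≁ u₃`,
then the induced subgraph of the doubled graph `M` on `{u₁, u₂, u₃} × Bool` is triangle-free:
it contains no three pairwise adjacent vertices. -/
theorem statement11 {V : Type*} (G : SimpleGraph V) (u₁ u₂ u₃ : V)
    (h12 : u₁ ≠ u₂) (h13 : u₁ ≠ u₃) (h23 : u₂ ≠ u₃)
    (a12 : G.Adj u₁ u₂) (a13 : G.Adj u₁ u₃) (a23 : ¬ G.Adj u₂ u₃) :
    ¬ ∃ x y z : V × Bool,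
        x.1 ∈ ({u₁, u₂, u₃} : Set V) ∧ y.1 ∈ ({u₁, u₂, u₃} : Set V) ∧
        z.1 ∈ ({u₁, u₂, u₃} : Set V) ∧
        (doubled G).Adj x y ∧ (doubled G).Adj x z ∧ (doubled G).Adj y z := by
  rintro ⟨⟨x1, xb⟩, ⟨y1, yb⟩, ⟨z1, zb⟩, hx, hy, hz, hxy, hxz, hyz⟩
  have a21 := a12.symm
  have a31 := a13.symm
  have a32 : ¬ G.Adj u₃ u₂ := fun h => a23 h.symm
  have n1 : ¬ G.Adj u₁ u₁ := G.irrefl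
  have n2 : ¬ G.Adj u₂ u₂ := G.irrefl
  have n3 : ¬ G.Adj u₃ u₃ := G.irrefl
  simp only [Set.mem_insert_iff, Set.mem_singleton_iff] at hx hy hz
  rcases hx with rfl | rfl | rfl <;> rcases hy with rfl | rfl | rfl <;>
    rcases hz with rfl | rfl | rfl <;> cases xb <;> cases yb <;> cases zb <;>
    simp_all [doubled]
end
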